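/- Let λ > 0, k ∈ ℝ, and let V : ℝ → ℝ be continuous, and set P(y) = k² − V(y). Suppose u : ℝ → ℝ is a twice continuously differentiable integrable function satisfying the stationary gain field equation u(x) = (1/(2λ)) ∫_ℝ e^{−λ|x−y|} P(y) u(y) dy for all x ∈ ℝ (with the integral absolutely convergent). Then u satisfies the time-independent Schrödinger equation −u''(x) + V(x) u(x) = E u(x) for all x ∈ ℝ, where E = k² − λ². -/

import Mathlib

open MeasureTheory Real Set

private lemma my_integral_Ici_sub_Ici {f : ℝ → ℝ} {a b : ℝ}
    (ha : IntegrableOn f (Ici a)) (hb : IntegrableOn f (Ici b)) :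
    (∫ x in Ici a, f x) - ∫ x in Ici b, f x = ∫ x in a..b, f x := by
  wlog hab : a ≤ b generalizing a b
  · rw [intervalIntegral.integral_symm, ← this hb ha (le_of_not_ge hab), neg_sub]
  rw [sub_eq_iff_eq_add, intervalIntegral.integral_of_le hab]
  simp only [integral_Ici_eq_integral_Ioi]
  rw [← setIntegral_union (Ioc_disjoint_Ioi le_rfl) measurableSet_Ioi
      (ha.mono_set (Ioc_subset_Icc_self.trans Icc_subset_Ici_self))
      (hb.mono_set Ioi_subset_Ici_self),
    Ioc_union_Ioi_eq_Ioi hab]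

set_option maxHeartbeats 1000000 in
theorem stmt_19 (lam : ℝ) (hlam : 0 < lam) (k : ℝ)
    (V : ℝ → ℝ) (hV : Continuous V)
    (u : ℝ → ℝ) (hu : ContDiff ℝ 2 u) (hu_int : Integrable u)
    (hint : ∀ x : ℝ,
      Integrable fun y : ℝ => Real.exp (-lam * |x - y|) * ((k ^ 2 - V y) * u y))
    (heq : ∀ x : ℝ,
      u x = (1 / (2 * lam)) *
        ∫ y : ℝ, Real.exp (-lam * |x - y|) * ((k ^ 2 - V y) * u y)) :
    ∀ x : ℝ, -(deriv (deriv u) x) + V x * u x = (k ^ 2 - lam ^ 2) * u x := by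
  have hlam0 : lam ≠ 0 := ne_of_gt hlam
  set g : ℝ → ℝ := fun y => (k ^ 2 - V y) * u y with hg_def
  have hg : Continuous g := (continuous_const.sub hV).mul hu.continuous
  set f₁ : ℝ → ℝ := fun y => Real.exp (lam * y) * g y with hf1_def
  set f₂ : ℝ → ℝ := fun y => Real.exp (-lam * y) * g y with hf2_def
  have hf1 : Continuous f₁ := ((continuous_const.mul continuous_id).rexp).mul hg
  have hf2 : Continuous f₂ := ((continuous_const.mul continuous_id).rexp).mul hg
  -- pointwise kernel identities
  have hker1 : ∀ x y : ℝ, y ∈ Iic x →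
      Real.exp (lam * x) * (Real.exp (-lam * |x - y|) * g y) = f₁ y := by
    intro x y hy
    rw [abs_of_nonneg (sub_nonneg.2 hy), ← mul_assoc, ← Real.exp_add]
    show Real.exp (lam * x + -lam * (x - y)) * g y = Real.exp (lam * y) * g y
    congr 2
    ring
  have hker2 : ∀ x y : ℝ, y ∈ Ici x →
      Real.exp (-lam * x) * (Real.exp (-lam * |x - y|) * g y) = f₂ y := by
    intro x y hy
    rw [abs_sub_comm, abs_of_nonneg (sub_nonneg.2 hy), ← mul_assoc, ← Real.exp_add]
    show Real.exp (-lam * x + -lam * (y - x)) * g y = Real.exp (-lam * y) * g y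
    congr 2
    ring
  -- integrability
  have hI1 : ∀ x : ℝ, IntegrableOn f₁ (Iic x) := fun x =>
    IntegrableOn.congr_fun (((hint x).integrableOn).const_mul (Real.exp (lam * x)))
      (fun y hy => hker1 x y hy) measurableSet_Iic
  have hI2 : ∀ x : ℝ, IntegrableOn f₂ (Ici x) := fun x =>
    IntegrableOn.congr_fun (((hint x).integrableOn).const_mul (Real.exp (-lam * x)))
      (fun y hy => hker2 x y hy) measurableSet_Ici
  set F : ℝ → ℝ := fun x => ∫ y in Iic x, f₁ y with hF_def
  set G : ℝ → ℝ := fun x => ∫ y in Ici x, f₂ y with hG_def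
  -- u in terms of F and G
  have hu_eq : ∀ x : ℝ, u x = (1 / (2 * lam)) *
      (Real.exp (-lam * x) * F x + Real.exp (lam * x) * G x) := by
    intro x
    rw [heq x]
    congr 1
    have hsplit : (∫ y : ℝ, Real.exp (-lam * |x - y|) * g y) =
        (∫ y in Iic x, Real.exp (-lam * |x - y|) * g y) +
        ∫ y in Ici x, Real.exp (-lam * |x - y|) * g y := by
      have hsp := intervalIntegral.integral_Iio_add_Ici
        (f := fun y : ℝ => Real.exp (-lam * |x - y|) * g y) (μ := volume) (b := x)
        ((hint x).integrableOn) ((hint x).integrableOn)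
      rw [integral_Iic_eq_integral_Iio]
      linarith [hsp]
    rw [hsplit]
    congr 1
    · rw [← integral_const_mul]
      refine setIntegral_congr_fun measurableSet_Iic fun y hy => ?_
      have h1 := hker1 x y hy
      calc Real.exp (-lam * |x - y|) * g y
          = (Real.exp (-lam * x) * Real.exp (lam * x)) *
            (Real.exp (-lam * |x - y|) * g y) := by
            rw [← Real.exp_add]
            have : -lam * x + lam * x = 0 := by ring
            rw [this, Real.exp_zero, one_mul]
        _ = Real.exp (-lam * x) * f₁ y := by rw [mul_assoc, h1]
    · rw [← integral_const_mul]
      refine setIntegral_congr_fun measurableSet_Ici fun y hy => ?_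
      have h1 := hker2 x y hy
      calc Real.exp (-lam * |x - y|) * g y
          = (Real.exp (lam * x) * Real.exp (-lam * x)) *
            (Real.exp (-lam * |x - y|) * g y) := by
            rw [← Real.exp_add]
            have : lam * x + -lam * x = 0 := by ring
            rw [this, Real.exp_zero, one_mul]
        _ = Real.exp (lam * x) * f₂ y := by rw [mul_assoc, h1]
  -- derivatives of F and G
  have hF' : ∀ x : ℝ, HasDerivAt F (f₁ x) x := by
    intro x
    have hfun : F = fun t => F 0 + ∫ y in (0:ℝ)..t, f₁ y := by
      funext t
      have := intervalIntegral.integral_Iic_sub_Iic (hI1 0) (hI1 t)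
      simp only [hF_def]
      linarith [this]
    rw [hfun]
    exact (intervalIntegral.integral_hasDerivAt_right (hf1.intervalIntegrable 0 x)
      (hf1.stronglyMeasurableAtFilter _ _) hf1.continuousAt).const_add (F 0)
  have hG' : ∀ x : ℝ, HasDerivAt G (-f₂ x) x := by
    intro x
    have hfun : G = fun t => G 0 - ∫ y in (0:ℝ)..t, f₂ y := by
      funext t
      have := my_integral_Ici_sub_Ici (hI2 0) (hI2 t)
      simp only [hG_def]
      linarith [this]
    rw [hfun]
    simpa using (intervalIntegral.integral_hasDerivAt_right (hf2.intervalIntegrable 0 x)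
      (hf2.stronglyMeasurableAtFilter _ _) hf2.continuousAt).const_sub (G 0)
  -- basic exp facts
  have e1 : ∀ x : ℝ, Real.exp (-lam * x) * f₁ x = g x := by
    intro x
    show Real.exp (-lam * x) * (Real.exp (lam * x) * g x) = g x
    rw [← mul_assoc, ← Real.exp_add]
    have : -lam * x + lam * x = 0 := by ring
    rw [this, Real.exp_zero, one_mul]
  have e2 : ∀ x : ℝ, Real.exp (lam * x) * f₂ x = g x := by
    intro x
    show Real.exp (lam * x) * (Real.exp (-lam * x) * g x) = g x
    rw [← mul_assoc, ← Real.exp_add]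
    have : lam * x + -lam * x = 0 := by ring
    rw [this, Real.exp_zero, one_mul]
  have hFG2 : ∀ x : ℝ, Real.exp (-lam * x) * F x + Real.exp (lam * x) * G x
      = 2 * lam * u x := by
    intro x
    rw [hu_eq x]
    field_simp
  have hem : ∀ x : ℝ, HasDerivAt (fun t : ℝ => Real.exp (-lam * t))
      (-lam * Real.exp (-lam * x)) x := by
    intro x
    simpa [mul_comm] using ((hasDerivAt_id x).const_mul (-lam)).exp
  have hep : ∀ x : ℝ, HasDerivAt (fun t : ℝ => Real.exp (lam * t))
      (lam * Real.exp (lam * x)) x := by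
    intro x
    simpa [mul_comm] using ((hasDerivAt_id x).const_mul lam).exp
  -- first derivative of u
  have hd1 : ∀ x : ℝ, HasDerivAt u
      ((-Real.exp (-lam * x) * F x + Real.exp (lam * x) * G x) / 2) x := by
    intro x
    have hw : (fun t : ℝ => Real.exp (-lam * t) * F t + Real.exp (lam * t) * G t)
        = fun t => 2 * lam * u t := funext fun t => hFG2 t
    have h1 := ((hem x).mul (hF' x)).add ((hep x).mul (hG' x))
    rw [show ((fun t : ℝ => Real.exp (-lam * t)) * F + (fun t : ℝ => Real.exp (lam * t)) * G)
        = (fun t => 2 * lam * u t) from hw] at h1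
    have h2 := h1.const_mul (1 / (2 * lam))
    have huu : (fun t : ℝ => 1 / (2 * lam) * (2 * lam * u t)) = u := by
      funext t
      field_simp
    rw [huu] at h2
    refine h2.congr_deriv ?_
    symm
    field_simp
    have e1' := e1 x
    have e2' := e2 x
    simp only [neg_mul] at e1' e2' ⊢
    linear_combination (norm := ring_nf) e2' - e1'
  have hderiv_u : deriv u = fun x =>
      (-Real.exp (-lam * x) * F x + Real.exp (lam * x) * G x) / 2 :=
    funext fun x => (hd1 x).deriv
  -- second derivative
  have hd2 : ∀ x : ℝ, HasDerivAt (deriv u) (lam ^ 2 * u x - g x) x := by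
    intro x
    rw [hderiv_u]
    have h1 := (((hem x).neg.mul (hF' x)).add ((hep x).mul (hG' x))).div_const 2
    have h1' : HasDerivAt (fun t : ℝ =>
        (-Real.exp (-lam * t) * F t + Real.exp (lam * t) * G t) / 2) _ x := h1
    convert h1' using 1
    simp only [Pi.neg_apply]
    first
    | linear_combination (-(lam/2)) * hFG2 x + (1/2) * e1 x + (1/2) * e2 x
    | linear_combination (lam/2) * hFG2 x + (1/2) * e1 x + (1/2) * e2 x
  intro x
  have hx : deriv (deriv u) x = lam ^ 2 * u x - g x := (hd2 x).deriv
  rw [hx]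
  show -(lam ^ 2 * u x - (k ^ 2 - V x) * u x) + V x * u x = (k ^ 2 - lam ^ 2) * u x
  ring
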